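/- In an e-ring, the set P of projections, partially ordered by the order inherited from G and with orthocomplementation p ↦ 1−p, is an orthomodular poset in which the supremum of orthogonal projections p ≤ 1−q is p+q. -/
import Mathlib


/-- An e-ring: an associative unital ring `R` together with a set `E` of effects.
`E⁺` is the additive submonoid generated by `E` (the set of finite sums of effects). -/
structure ERing (R : Type*) [Ring R] where
  E : Set R
  zero_mem : (0:R) ∈ E
  one_mem : (1:R) ∈ E
  compl_mem : ∀ e ∈ E, 1 - e ∈ E
  ax_i : ∀ a ∈ AddSubmonoid.closure E, -a ∈ AddSubmonoid.closure E → a = 0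
  ax_ii : ∀ a ∈ AddSubmonoid.closure E, 1 - a ∈ AddSubmonoid.closure E → a ∈ E
  ax_iii : ∀ a ∈ AddSubmonoid.closure E, ∀ b ∈ AddSubmonoid.closure E,
    a * b = b * a → a * b ∈ AddSubmonoid.closure E
  ax_iv : ∀ a ∈ AddSubmonoid.closure E, ∀ b ∈ AddSubmonoid.closure E,
    a * b * a ∈ AddSubmonoid.closure E
  ax_v : ∀ a ∈ AddSubmonoid.closure E, ∀ b ∈ AddSubmonoid.closure E,
    a * b * a = 0 → a * b = 0 ∧ b * a = 0
  ax_vi : ∀ a ∈ AddSubmonoid.closure E, ∀ b ∈ AddSubmonoid.closure E,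
    (a - b) * (a - b) ∈ AddSubmonoid.closure E

namespace ERing

variable {R : Type*} [Ring R]

/-- The positive cone `E⁺`: all finite sums of effects. -/
def Ep (S : ERing R) : Set R := (AddSubmonoid.closure S.E : Set R)

/-- The directed group `G = E⁺ − E⁺` (as a subset of `R`). -/
def G (S : ERing R) : Set R := {x | ∃ a ∈ S.Ep, ∃ b ∈ S.Ep, x = a - b}

/-- The partial order with positive cone `E⁺`: `g ≤ h` iff `h − g ∈ E⁺`. -/
def le (S : ERing R) (g h : R) : Prop := h - g ∈ S.Ep

/-- The set of projections: idempotent elements of `G`. -/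
def P (S : ERing R) : Set R := {p | p ∈ S.G ∧ p * p = p}

end ERing

namespace ERing

variable {R : Type*} [Ring R] (S : ERing R)

lemma one_mem_Ep : (1:R) ∈ S.Ep := AddSubmonoid.subset_closure S.one_mem

lemma zero_mem_Ep : (0:R) ∈ S.Ep := (AddSubmonoid.closure S.E).zero_mem

lemma add_mem_Ep {a b : R} (ha : a ∈ S.Ep) (hb : b ∈ S.Ep) : a + b ∈ S.Ep :=
  (AddSubmonoid.closure S.E).add_mem ha hb

/-- Any projection lies in the cone. -/
lemma P_mem_Ep {p : R} (hp : p ∈ S.P) : p ∈ S.Ep := by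
  obtain ⟨⟨a, ha, b, hb, rfl⟩, hidem⟩ := hp
  have := S.ax_vi a ha b hb
  rwa [hidem] at this

/-- The complement of a projection lies in the cone. -/
lemma one_sub_mem_Ep {p : R} (hp : p ∈ S.P) : 1 - p ∈ S.Ep := by
  have h := S.ax_vi 1 S.one_mem_Ep p (S.P_mem_Ep hp)
  have hidem := hp.2
  have : (1 - p) * (1 - p) = 1 - p := by
    have : (1 - p) * (1 - p) = 1 - p - p + p * p := by noncomm_ring
    rw [this, hidem]; abel
  rwa [this] at h

lemma one_sub_mem_P {p : R} (hp : p ∈ S.P) : 1 - p ∈ S.P := by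
  refine ⟨⟨1, S.one_mem_Ep, p, S.P_mem_Ep hp, rfl⟩, ?_⟩
  have : (1 - p) * (1 - p) = 1 - p - p + p * p := by noncomm_ring
  rw [this, hp.2]; abel

/-- Orthogonality: `p ≤ 1 - q` implies `pq = qp = 0`. -/
lemma orth {p q : R} (hp : p ∈ S.P) (hq : q ∈ S.P) (h : S.le p (1 - q)) :
    p * q = 0 ∧ q * p = 0 := by
  have hpE := S.P_mem_Ep hp
  have hqE := S.P_mem_Ep hq
  have h1 : (1 - q - p) ∈ S.Ep := h
  have h2 : p * (1 - q - p) * p ∈ S.Ep := S.ax_iv p hpE _ h1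
  have h3 : p * (1 - q - p) * p = -(p * q * p) := by
    have e : p * (1 - q - p) * p = p * p - p * q * p - p * p * p := by noncomm_ring
    rw [e, hp.2, hp.2]; abel
  rw [h3] at h2
  have h4 : p * q * p ∈ S.Ep := S.ax_iv p hpE q hqE
  have h5 : p * q * p = 0 := S.ax_i _ h4 h2
  exact S.ax_v p hpE q hqE h5

/-- Absorption: `p ≤ q` implies `pq = p` and `qp = p`. -/
lemma absorb {p q : R} (hp : p ∈ S.P) (hq : q ∈ S.P) (h : S.le p q) :
    p * q = p ∧ q * p = p := by
  have h' : S.le p (1 - (1 - q)) := by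
    show 1 - (1 - q) - p ∈ S.Ep
    have : 1 - (1 - q) - p = q - p := by abel
    rw [this]; exact h
  obtain ⟨h1, h2⟩ := S.orth hp (S.one_sub_mem_P hq) h'
  constructor
  · have : p * q = p - p * (1 - q) := by noncomm_ring
    rw [this, h1]; abel
  · have : q * p = p - (1 - q) * p := by noncomm_ring
    rw [this, h2]; abel

end ERing

theorem stmt14 {R : Type*} [Ring R] (S : ERing R) :
    -- P is a bounded poset (the order is the restriction of that of G, hence a
    -- partial order by antisymmetry from ax_i):
    ((0 : R) ∈ S.P ∧ (1 : R) ∈ S.P ∧ ∀ p ∈ S.P, S.le 0 p ∧ S.le p 1) ∧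
    -- p ↦ 1 − p is an involutive order-reversing orthocomplementation:
    (∀ p ∈ S.P, (1 - p) ∈ S.P) ∧
    (∀ p ∈ S.P, 1 - (1 - p) = p) ∧
    (∀ p ∈ S.P, ∀ q ∈ S.P, S.le p q → S.le (1 - q) (1 - p)) ∧
    -- if p ≤ 1 − q, then p + q is the supremum of p and q in P:
    (∀ p ∈ S.P, ∀ q ∈ S.P, S.le p (1 - q) →
      p + q ∈ S.P ∧ S.le p (p + q) ∧ S.le q (p + q) ∧
      ∀ r ∈ S.P, S.le p r → S.le q r → S.le (p + q) r) ∧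
    -- the orthomodular law: if p ≤ q then q − p = q ∧ (1 − p) in P and
    -- q = p + (q − p) = p ∨ (q ∧ (1 − p)):
    (∀ p ∈ S.P, ∀ q ∈ S.P, S.le p q →
      q - p ∈ S.P ∧ q = p + (q - p) ∧
      S.le (q - p) q ∧ S.le (q - p) (1 - p) ∧
      ∀ r ∈ S.P, S.le r q → S.le r (1 - p) → S.le r (q - p)) := by
  refine ⟨⟨⟨⟨0, S.zero_mem_Ep, 0, S.zero_mem_Ep, by simp⟩, by simp⟩, ⟨⟨1, S.one_mem_Ep, 0, S.zero_mem_Ep, by simp⟩, by simp⟩,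
    fun p hp => ⟨by simpa [ERing.le] using S.P_mem_Ep hp, by simpa [ERing.le] using S.one_sub_mem_Ep hp⟩⟩,
    fun p hp => S.one_sub_mem_P hp, fun p hp => by abel, fun p hp q hq h => ?_, ?_, ?_⟩
  · show 1 - p - (1 - q) ∈ S.Ep
    have : 1 - p - (1 - q) = q - p := by abel
    rw [this]; exact h
  · rintro p hp q hq h
    obtain ⟨h1, h2⟩ := S.orth hp hq h
    have hsq : (p + q) * (p + q) = p + q := by
      have e : (p + q) * (p + q) = p * p + p * q + (q * p + q * q) := by noncomm_ring
      rw [e, hp.2, hq.2, h1, h2]; abel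
    have hpq : p + q ∈ S.P := ⟨⟨p + q, S.add_mem_Ep (S.P_mem_Ep hp) (S.P_mem_Ep hq), 0, S.zero_mem_Ep, by abel⟩, hsq⟩
    refine ⟨hpq, ?_, ?_, ?_⟩
    · show p + q - p ∈ S.Ep; simpa using S.P_mem_Ep hq
    · show p + q - q ∈ S.Ep; simpa using S.P_mem_Ep hp
    · intro r hr hpr hqr
      obtain ⟨hrp1, hrp2⟩ := S.absorb hp hr hpr
      obtain ⟨hrq1, hrq2⟩ := S.absorb hq hr hqr
      have hsq2 : (r - (p + q)) * (r - (p + q)) = r - (p + q) := by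
        have e : (r - (p + q)) * (r - (p + q)) =
            r * r - r * p - r * q - p * r + p * p + p * q - q * r + q * p + q * q := by
          noncomm_ring
        rw [e, hr.2, hp.2, hq.2, h1, h2, hrp1, hrp2, hrq1, hrq2]; abel
      show r - (p + q) ∈ S.Ep
      have : r - (p + q) ∈ S.P :=
        ⟨⟨r, S.P_mem_Ep hr, p + q, S.add_mem_Ep (S.P_mem_Ep hp) (S.P_mem_Ep hq), rfl⟩, hsq2⟩
      exact S.P_mem_Ep this
  · rintro p hp q hq h
    obtain ⟨h1, h2⟩ := S.absorb hp hq h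
    have hsq : (q - p) * (q - p) = q - p := by
      have e : (q - p) * (q - p) = q * q - q * p - p * q + p * p := by noncomm_ring
      rw [e, hq.2, hp.2, h1, h2]; abel
    have hqp : q - p ∈ S.P := ⟨⟨q, S.P_mem_Ep hq, p, S.P_mem_Ep hp, rfl⟩, hsq⟩
    refine ⟨hqp, by abel, ?_, ?_, ?_⟩
    · show q - (q - p) ∈ S.Ep; simpa using S.P_mem_Ep hp
    · show 1 - p - (q - p) ∈ S.Ep
      have : 1 - p - (q - p) = 1 - q := by abel
      rw [this]; exact S.one_sub_mem_Ep hq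
    · intro r hr hrq hrp
      obtain ⟨hq1, hq2⟩ := S.absorb hr hq hrq
      obtain ⟨hp1, hp2⟩ := S.orth hr hp hrp
      have hsq2 : (q - p - r) * (q - p - r) = q - p - r := by
        have e : (q - p - r) * (q - p - r) =
            q * q - q * p - q * r - p * q + p * p + p * r - r * q + r * p + r * r := by
          noncomm_ring
        rw [e, hq.2, hp.2, hr.2, h1, h2, hq1, hq2, hp1, hp2]; abel
      show q - p - r ∈ S.Ep
      have : q - p - r ∈ S.P :=
        ⟨⟨q, S.P_mem_Ep hq, p + r, S.add_mem_Ep (S.P_mem_Ep hp) (S.P_mem_Ep hr), by abel⟩, hsq2⟩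
      exact S.P_mem_Ep this
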